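/- Let q ∈ ℂ[x,y] be a polynomial whose leading quasi-homogeneous part with respect to the weights (k,l) equals x^k + y^l for some coprime integers k, l ≥ 2. Then the quotient ℂ-algebra ℂ[x,y]/(q) is NOT isomorphic as a ℂ-algebra to ℂ[t]. -/

import Mathlib

open MvPolynomial

/-- The weighted degree of `r ∈ ℂ[x,y]` with respect to the weights `deg x = l`,
`deg y = k`: the maximum of `l·i + k·j` over monomials `x^i y^j` of `r`. -/
noncomputable def wdeg (k l : ℕ) (r : MvPolynomial (Fin 2) ℂ) : ℕ :=
  r.weightedTotalDegree ![l, k]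

/-- The leading quasi-homogeneous part of `r ∈ ℂ[x,y]` with respect to the weights
`(k, l)`: the sum of the monomials `a_{ij} x^i y^j` of `r` with `l·i + k·j` maximal. -/
noncomputable def leadingPart (k l : ℕ) (r : MvPolynomial (Fin 2) ℂ) :
    MvPolynomial (Fin 2) ℂ :=
  ∑ s ∈ r.support.filter (fun s => l * s 0 + k * s 1 = wdeg k l r),
    monomial s (coeff s r)

section AMSAux
open Polynomial


theorem weight_fin2 (k l : ℕ) (s : Fin 2 →₀ ℕ) :
    Finsupp.weight ![l, k] s = l * s 0 + k * s 1 := by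
  rw [Finsupp.weight_apply, Finsupp.sum_fintype]
  · simp [Fin.sum_univ_two, mul_comm]
  · intro i; simp

theorem coeff_leadingPart (k l : ℕ) (q : MvPolynomial (Fin 2) ℂ) (t : Fin 2 →₀ ℕ) :
    coeff t (leadingPart k l q) =
      if l * t 0 + k * t 1 = wdeg k l q then coeff t q else 0 := by
  rw [leadingPart]
  classical
  rw [MvPolynomial.coeff_sum]
  simp only [MvPolynomial.coeff_monomial]
  rw [Finset.sum_ite_eq' (q.support.filter fun s => l * s 0 + k * s 1 = wdeg k l q) t]
  by_cases h : l * t 0 + k * t 1 = wdeg k l q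
  · by_cases ht : t ∈ q.support
    · simp [h, ht]
    · simp [h, ht, MvPolynomial.notMem_support_iff.mp ht]
  · simp [h]

theorem extraction (q : MvPolynomial (Fin 2) ℂ) (k l : ℕ) (hk : 2 ≤ k) (hl : 2 ≤ l)
    (hlead : leadingPart k l q = X 0 ^ k + X 1 ^ l) :
    wdeg k l q = l * k ∧
    (∀ s ∈ q.support, l * s 0 + k * s 1 ≤ l * k) ∧
    (∀ s ∈ (q - X 0 ^ k - X 1 ^ l).support, l * s 0 + k * s 1 < l * k) := by
  classical
  set s₀ : Fin 2 →₀ ℕ := Finsupp.single 0 k with hs₀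
  set s₁ : Fin 2 →₀ ℕ := Finsupp.single 1 l with hs₁
  have hne : s₀ ≠ s₁ := by
    intro h
    have := DFunLike.congr_fun h 0
    simp [hs₀, hs₁, Finsupp.single_eq_same] at this
    omega
  have hca : ∀ t, coeff t (X 0 ^ k + X 1 ^ l : MvPolynomial (Fin 2) ℂ) =
      (if s₀ = t then (1:ℂ) else 0) + (if s₁ = t then 1 else 0) := by
    intro t
    rw [MvPolynomial.coeff_add, MvPolynomial.X_pow_eq_monomial, MvPolynomial.X_pow_eq_monomial,
      MvPolynomial.coeff_monomial, MvPolynomial.coeff_monomial]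
  have hs00 : s₀ 0 = k := Finsupp.single_eq_same
  have hs01 : s₀ 1 = 0 := Finsupp.single_eq_of_ne (by decide)
  have hs10 : s₁ 0 = 0 := Finsupp.single_eq_of_ne (by decide)
  have hs11 : s₁ 1 = l := Finsupp.single_eq_same
  -- coeff s₀ of leadingPart is 1
  have h0 : (if l * s₀ 0 + k * s₀ 1 = wdeg k l q then coeff s₀ q else 0) = 1 := by
    rw [← coeff_leadingPart, hlead, hca, if_pos rfl, if_neg (fun h : s₁ = s₀ => hne h.symm)]
    simp
  have hd : wdeg k l q = l * k := by
    by_contra h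
    rw [if_neg (by rw [hs00, hs01]; omega)] at h0
    exact one_ne_zero h0.symm
  have hcq0 : coeff s₀ q = 1 := by
    rwa [if_pos (by rw [hs00, hs01, hd]; ring)] at h0
  have h1 : (if l * s₁ 0 + k * s₁ 1 = wdeg k l q then coeff s₁ q else 0) = 1 := by
    rw [← coeff_leadingPart, hlead, hca, if_neg hne, if_pos rfl]
    simp
  have hcq1 : coeff s₁ q = 1 := by
    rwa [if_pos (by rw [hs10, hs11, hd]; ring)] at h1
  have hwle : ∀ t ∈ q.support, l * t 0 + k * t 1 ≤ l * k := by
    intro t ht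
    have := MvPolynomial.le_weightedTotalDegree ![l, k] ht
    rw [weight_fin2] at this
    rw [← hd]
    exact this
  refine ⟨hd, hwle, ?_⟩
  intro s hs
  rw [MvPolynomial.mem_support_iff] at hs
  have hco : coeff s (q - X 0 ^ k - X 1 ^ l) = coeff s q
      - ((if s₀ = s then (1:ℂ) else 0) + (if s₁ = s then 1 else 0)) := by
    rw [MvPolynomial.coeff_sub, MvPolynomial.coeff_sub, ← hca, MvPolynomial.coeff_add]; ring
  have hsne0 : s ≠ s₀ := by
    rintro rfl
    rw [hco, hcq0, if_pos rfl, if_neg (fun h => hne h.symm)] at hs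
    simp at hs
  have hsne1 : s ≠ s₁ := by
    rintro rfl
    rw [hco, hcq1, if_neg (fun h => hne h), if_pos rfl] at hs
    simp at hs
  rw [hco, if_neg (fun h => hsne0 h.symm), if_neg (fun h => hsne1 h.symm)] at hs
  simp only [add_zero, sub_zero] at hs
  have hmem : s ∈ q.support := MvPolynomial.mem_support_iff.mpr hs
  rcases lt_or_eq_of_le (hwle s hmem) with h | h
  · exact h
  · exfalso
    have : coeff s (leadingPart k l q) = coeff s q := by
      rw [coeff_leadingPart, if_pos (by rw [hd]; exact h)]
    rw [hlead, hca, if_neg (fun h' => hsne0 h'.symm), if_neg (fun h' => hsne1 h'.symm)] at this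
    simp at this
    exact hs this.symm


theorem aeval_monomial_fin2 (f g : Polynomial ℂ) (s : Fin 2 →₀ ℕ) (c : ℂ) :
    MvPolynomial.aeval ![f,g] (MvPolynomial.monomial s c) = Polynomial.C c * f ^ (s 0) * g ^ (s 1) := by
  rw [MvPolynomial.aeval_monomial, Finsupp.prod_pow]
  rw [Fin.prod_univ_two]
  simp [algebraMap_eq, mul_assoc]

theorem degbound_mono (f g : Polynomial ℂ) (s : Fin 2 →₀ ℕ) (c : ℂ) (N : ℕ)
    (h : f.natDegree * s 0 + g.natDegree * s 1 ≤ N) :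
    (MvPolynomial.aeval ![f,g] (MvPolynomial.monomial s c)).degree ≤ N := by
  rw [aeval_monomial_fin2]
  refine le_trans (degree_mul_le _ _) ?_
  refine le_trans (add_le_add (degree_mul_le _ _) (degree_pow_le _ _)) ?_
  refine le_trans (add_le_add (add_le_add degree_C_le (degree_pow_le _ _)) le_rfl) ?_
  have hf : degree f ≤ (f.natDegree : WithBot ℕ) := degree_le_natDegree
  have hg : degree g ≤ (g.natDegree : WithBot ℕ) := degree_le_natDegree
  calc (0 : WithBot ℕ) + s 0 • degree f + s 1 • degree g
      ≤ 0 + s 0 • (f.natDegree : WithBot ℕ) + s 1 • (g.natDegree : WithBot ℕ) := by gcongr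
    _ = ((f.natDegree * s 0 + g.natDegree * s 1 : ℕ) : WithBot ℕ) := by
        push_cast [nsmul_eq_mul]; ring
    _ ≤ (N : WithBot ℕ) := by exact_mod_cast h

theorem degbound (f g : Polynomial ℂ) (r : MvPolynomial (Fin 2) ℂ) (N : ℕ)
    (h : ∀ s ∈ r.support, f.natDegree * s 0 + g.natDegree * s 1 ≤ N) :
    (MvPolynomial.aeval ![f,g] r).degree ≤ N := by
  conv_lhs => rw [r.as_sum]
  rw [map_sum]
  refine (Polynomial.degree_sum_le _ _).trans ?_
  rw [Finset.sup_le_iff]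
  intro s hs
  exact degbound_mono f g s _ N (h s hs)

theorem degbound_pderiv (f g : Polynomial ℂ) (r : MvPolynomial (Fin 2) ℂ) (N : ℕ) (i : Fin 2)
    (D : ℕ) (hD : (![f, g] i).natDegree = D)
    (h : ∀ s ∈ r.support, f.natDegree * s 0 + g.natDegree * s 1 ≤ N + D) :
    (MvPolynomial.aeval ![f,g] (pderiv i r)).degree ≤ N := by
  classical
  conv_lhs => rw [r.as_sum]
  rw [map_sum, map_sum]
  refine (Polynomial.degree_sum_le _ _).trans ?_
  rw [Finset.sup_le_iff]
  intro s hs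
  rw [pderiv_monomial]
  set t : Fin 2 →₀ ℕ := s - Finsupp.single i 1 with ht
  by_cases h0 : s i = 0
  · rw [h0, Nat.cast_zero, mul_zero, MvPolynomial.monomial_zero, map_zero, Polynomial.degree_zero]
    exact bot_le
  · refine degbound_mono f g _ _ N ?_
    have hsub0 : t 0 = s 0 - (Finsupp.single i 1) 0 := by
      rw [ht, Finsupp.tsub_apply]
    have hsub1 : t 1 = s 1 - (Finsupp.single i 1) 1 := by
      rw [ht, Finsupp.tsub_apply]
    have hs' := h s hs
    fin_cases i
    · simp only [Fin.isValue, Finsupp.single_apply] at hsub0 hsub1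
      norm_num at hsub0 hsub1
      have hD' : f.natDegree = D := by simpa using hD
      have h00 : s 0 ≠ 0 := by simpa using h0
      have h1 : 1 ≤ s 0 := Nat.one_le_iff_ne_zero.mpr h00
      obtain ⟨u, hu⟩ := Nat.exists_eq_add_of_le h1
      rw [hsub0, hsub1, show s 0 - 1 = u by omega]
      rw [hu, mul_add, mul_one] at hs'
      omega
    · simp only [Fin.isValue, Finsupp.single_apply] at hsub0 hsub1
      norm_num at hsub0 hsub1
      have hD' : g.natDegree = D := by simpa using hD
      have h00 : s 1 ≠ 0 := by simpa using h0
      have h1 : 1 ≤ s 1 := Nat.one_le_iff_ne_zero.mpr h00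
      obtain ⟨u, hu⟩ := Nat.exists_eq_add_of_le h1
      rw [hsub0, hsub1, show s 1 - 1 = u by omega]
      rw [hu, mul_add, mul_one] at hs'
      omega

-- chain rule
theorem chainrule (f g : Polynomial ℂ) (r : MvPolynomial (Fin 2) ℂ) :
    derivative (aeval ![f,g] r) =
      aeval ![f,g] (pderiv 0 r) * derivative f + aeval ![f,g] (pderiv 1 r) * derivative g := by
  induction r using MvPolynomial.induction_on with
  | C a => simp
  | add p q hp hq => simp [map_add, hp, hq]; ring
  | mul_X p i hp =>
    rw [map_mul, derivative_mul, hp]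
    fin_cases i <;>
      simp [pderiv_mul, pderiv_X_self, pderiv_X_of_ne, map_add, map_mul,
        Matrix.cons_val_zero, Matrix.cons_val_one] <;> ring

theorem sq_dvd_of_double_root (p : Polynomial ℂ) (c : ℂ) (h0 : p.eval c = 0)
    (h1 : (Polynomial.derivative p).eval c = 0) : (Polynomial.X - Polynomial.C c)^2 ∣ p := by
  obtain ⟨p₁, hp₁⟩ := Polynomial.dvd_iff_isRoot.mpr h0
  rw [hp₁, derivative_mul, derivative_sub, derivative_X, derivative_C, sub_zero, one_mul] at h1
  simp only [Polynomial.eval_add, Polynomial.eval_mul, Polynomial.eval_sub, Polynomial.eval_X,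
    Polynomial.eval_C, sub_self, zero_mul, add_zero] at h1
  obtain ⟨p₂, hp₂⟩ := Polynomial.dvd_iff_isRoot.mpr h1
  exact ⟨p₂, by rw [hp₁, hp₂]; ring⟩

theorem exists_common_root (A B : Polynomial ℂ) (hA : A ≠ 0) (h : ¬ IsCoprime A B) :
    ∃ c, A.eval c = 0 ∧ B.eval c = 0 := by
  classical
  set d := EuclideanDomain.gcd A B with hd
  have hdA : d ∣ A := EuclideanDomain.gcd_dvd_left A B
  have hdB : d ∣ B := EuclideanDomain.gcd_dvd_right A B
  have hdu : ¬ IsUnit d := fun hu => h (EuclideanDomain.gcd_isUnit_iff.mp hu)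
  have hd0 : d ≠ 0 := fun h0 => hA ((EuclideanDomain.gcd_eq_zero_iff.mp h0).1)
  have hpos : 0 < d.degree := Polynomial.degree_pos_of_ne_zero_of_nonunit hd0 hdu
  obtain ⟨c, hc⟩ := Complex.isAlgClosed.exists_root d (by intro h'; rw [h'] at hpos; exact lt_irrefl _ hpos)
  obtain ⟨A', hA'⟩ := hdA
  obtain ⟨B', hB'⟩ := hdB
  refine ⟨c, ?_, ?_⟩ <;> simp [hA', hB', Polynomial.IsRoot.def.mp hc]

theorem cancel_top (u v : Polynomial ℂ) (M : ℕ) (hv : v.natDegree = M) (hvne : v ≠ 0)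
    (hu : u.degree ≤ ((M - 1 : ℕ) : WithBot ℕ)) (hM : 0 < M) (h : u + v = 0) : False := by
  have h1 : u.coeff M = 0 :=
    Polynomial.coeff_eq_zero_of_degree_lt (lt_of_le_of_lt hu (by exact_mod_cast Nat.sub_lt hM one_pos))
  have h2 : v.coeff M ≠ 0 := by
    rw [← hv, Polynomial.coeff_natDegree]
    exact Polynomial.leadingCoeff_ne_zero.mpr hvne
  have h3 := congrArg (fun p => Polynomial.coeff p M) h
  simp only [Polynomial.coeff_add, Polynomial.coeff_zero, h1, zero_add] at h3
  exact h2 h3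

/-- Core contradiction in the paper's proof of the Abhyankar–Moh–Suzuki theorem:
a polynomial `q ∈ ℂ[x,y]` whose leading quasi-homogeneous part with respect to coprime
weights `(k, l)`, `k, l ≥ 2`, equals `x^k + y^l` cannot have its zero fiber isomorphic
to `ℂ`, i.e. `ℂ[x,y]/(q)` is not isomorphic to `ℂ[t]` as a ℂ-algebra. -/
theorem zero_fiber_not_a_line
    (q : MvPolynomial (Fin 2) ℂ)
    (k l : ℕ) (hk : 2 ≤ k) (hl : 2 ≤ l) (hkl : Nat.Coprime k l)
    (hlead : leadingPart k l q = X 0 ^ k + X 1 ^ l) :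
    ¬ Nonempty ((MvPolynomial (Fin 2) ℂ ⧸ Ideal.span {q}) ≃ₐ[ℂ] Polynomial ℂ) := by
  rintro ⟨e⟩
  classical
  set ψ : MvPolynomial (Fin 2) ℂ →ₐ[ℂ] Polynomial ℂ :=
    e.toAlgHom.comp (Ideal.Quotient.mkₐ ℂ (Ideal.span {q})) with hψdef
  have hsurj : Function.Surjective ψ := by
    intro p
    obtain ⟨y, hy⟩ := e.surjective p
    obtain ⟨r, hr⟩ := Ideal.Quotient.mkₐ_surjective ℂ (Ideal.span {q}) y
    refine ⟨r, ?_⟩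
    rw [hψdef]
    simp only [AlgHom.comp_apply, AlgEquiv.toAlgHom_eq_coe, AlgHom.coe_coe]
    rw [hr]; exact hy
  have hker : ∀ r : MvPolynomial (Fin 2) ℂ, ψ r = 0 ↔ q ∣ r := by
    intro r
    rw [hψdef]
    simp only [AlgHom.comp_apply, AlgEquiv.toAlgHom_eq_coe, AlgHom.coe_coe]
    show e (Ideal.Quotient.mkₐ ℂ (Ideal.span {q}) r) = 0 ↔ q ∣ r
    rw [map_eq_zero_iff _ e.injective, Ideal.Quotient.mkₐ_eq_mk,
      Ideal.Quotient.eq_zero_iff_mem, Ideal.mem_span_singleton]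
  set f := ψ (X 0) with hfdef
  set g := ψ (X 1) with hgdef
  have hFψ : ∀ r, ψ r = MvPolynomial.aeval ![f, g] r := by
    intro r
    refine DFunLike.congr_fun (MvPolynomial.algHom_ext fun i => ?_) r
    fin_cases i <;> simp [hfdef, hgdef]
  set a := f.natDegree with hadef
  set b := g.natDegree with hbdef
  set r := q - X 0 ^ k - X 1 ^ l with hrdef
  obtain ⟨hd, hqle, hrsupp⟩ := extraction q k l hk hl hlead
  have hqeq : q = X 0 ^ k + X 1 ^ l + r := by rw [hrdef]; ring
  have hψq : (MvPolynomial.aeval ![f,g]) q = 0 := by rw [← hFψ]; exact (hker q).mpr dvd_rfl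
  obtain ⟨P, hP⟩ := hsurj Polynomial.X
  have hcq : MvPolynomial.aeval ![f,g] (pderiv 0 q) * derivative f
      + MvPolynomial.aeval ![f,g] (pderiv 1 q) * derivative g = 0 := by
    have h := chainrule f g q
    rw [hψq, Polynomial.derivative_zero] at h
    exact h.symm
  have hcP : MvPolynomial.aeval ![f,g] (pderiv 0 P) * derivative f
      + MvPolynomial.aeval ![f,g] (pderiv 1 P) * derivative g = 1 := by
    have h := chainrule f g P
    rw [← hFψ, hP, Polynomial.derivative_X] at h
    exact h.symm
  by_cases ha0 : a = 0 ∧ b = 0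
  · have hf0 : derivative f = 0 := by
      rw [Polynomial.eq_C_of_natDegree_eq_zero ha0.1, Polynomial.derivative_C]
    have hg0 : derivative g = 0 := by
      rw [Polynomial.eq_C_of_natDegree_eq_zero ha0.2, Polynomial.derivative_C]
    rw [hf0, hg0, mul_zero, mul_zero, add_zero] at hcP
    exact zero_ne_one hcP
  set M := max (k * a) (l * b) with hMdef
  have hM : 0 < M := by
    rcases not_and_or.mp ha0 with h | h
    · exact lt_of_lt_of_le (Nat.mul_pos (by omega) (Nat.pos_of_ne_zero h)) (le_max_left _ _)
    · exact lt_of_lt_of_le (Nat.mul_pos (by omega) (Nat.pos_of_ne_zero h)) (le_max_right _ _)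
  -- weighted bound on support of r
  have hrb : ∀ s ∈ r.support, a * s 0 + b * s 1 ≤ M - 1 := by
    intro s hs
    have h1 : l * s 0 + k * s 1 < l * k := hrsupp s hs
    have key : k * l * (a * s 0 + b * s 1) < k * l * M := by
      calc k * l * (a * s 0 + b * s 1) = (k*a) * (l * s 0) + (l*b) * (k * s 1) := by ring
        _ ≤ M * (l * s 0) + M * (k * s 1) :=
            Nat.add_le_add (Nat.mul_le_mul_right _ (le_max_left _ _))
              (Nat.mul_le_mul_right _ (le_max_right _ _))
        _ = M * (l * s 0 + k * s 1) := by ring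
        _ ≤ M * (l * k - 1) := Nat.mul_le_mul_left _ (by omega)
        _ < M * (l * k) := (Nat.mul_lt_mul_left hM).mpr (by omega)
        _ = k * l * M := by ring
    have := Nat.lt_of_mul_lt_mul_left key
    omega
  have hqb : ∀ s ∈ q.support, a * s 0 + b * s 1 ≤ M := by
    intro s hs
    have h1 : l * s 0 + k * s 1 ≤ l * k := hqle s hs
    have key : k * l * (a * s 0 + b * s 1) ≤ k * l * M := by
      calc k * l * (a * s 0 + b * s 1) = (k*a) * (l * s 0) + (l*b) * (k * s 1) := by ring
        _ ≤ M * (l * s 0) + M * (k * s 1) :=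
            Nat.add_le_add (Nat.mul_le_mul_right _ (le_max_left _ _))
              (Nat.mul_le_mul_right _ (le_max_right _ _))
        _ = M * (l * s 0 + k * s 1) := by ring
        _ ≤ M * (l * k) := Nat.mul_le_mul_left _ h1
        _ = k * l * M := by ring
    exact Nat.le_of_mul_le_mul_left key (by positivity)
  have heq : k * a = l * b := by
    rcases Nat.lt_trichotomy (k * a) (l * b) with hlt | heq | hgt
    · exfalso
      have hMeq : M = l * b := max_eq_right hlt.le
      have hb0 : b ≠ 0 := by intro h; rw [h, mul_zero] at hMeq; omega
      have hgne : g ≠ 0 := fun h => hb0 (by rw [hbdef, h, Polynomial.natDegree_zero])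
      refine cancel_top (MvPolynomial.aeval ![f,g] (X 0 ^ k + r)) (g ^ l) M ?_ ?_ ?_ hM ?_
      · rw [Polynomial.natDegree_pow, ← hbdef, hMeq]
      · exact pow_ne_zero _ hgne
      · refine degbound f g _ _ ?_
        intro s hs
        rcases Finset.mem_union.mp (MvPolynomial.support_add hs) with h | h
        · rw [MvPolynomial.support_X_pow] at h
          have hs' : s = Finsupp.single 0 k := Finset.mem_singleton.mp h
          rw [hs', Finsupp.single_eq_same, Finsupp.single_eq_of_ne (by decide)]
          rw [← hadef, ← hbdef]
          have hcomm : a * k = k * a := Nat.mul_comm a k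
          omega
        · rw [← hadef, ← hbdef]
          exact hrb s h
      · have h2 : (X 0 ^ k + r) + X 1 ^ l = q := by rw [hqeq]; ring
        have h3 : MvPolynomial.aeval ![f,g] ((X 0 ^ k + r) + X 1 ^ l : MvPolynomial (Fin 2) ℂ)
            = 0 := by rw [h2]; exact hψq
        rw [map_add] at h3
        rw [← h3]
        congr 1
        simp
    · exact heq
    · exfalso
      have hMeq : M = k * a := max_eq_left hgt.le
      have ha' : a ≠ 0 := by intro h; rw [h, mul_zero] at hMeq; omega
      have hfne : f ≠ 0 := fun h => ha' (by rw [hadef, h, Polynomial.natDegree_zero])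
      refine cancel_top (MvPolynomial.aeval ![f,g] (X 1 ^ l + r)) (f ^ k) M ?_ ?_ ?_ hM ?_
      · rw [Polynomial.natDegree_pow, ← hadef, hMeq]
      · exact pow_ne_zero _ hfne
      · refine degbound f g _ _ ?_
        intro s hs
        rcases Finset.mem_union.mp (MvPolynomial.support_add hs) with h | h
        · rw [MvPolynomial.support_X_pow] at h
          have hs' : s = Finsupp.single 1 l := Finset.mem_singleton.mp h
          rw [hs', Finsupp.single_eq_same, Finsupp.single_eq_of_ne (by decide)]
          rw [← hadef, ← hbdef]
          have hcomm : b * l = l * b := Nat.mul_comm b l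
          omega
        · rw [← hadef, ← hbdef]
          exact hrb s h
      · have h2 : (X 1 ^ l + r) + X 0 ^ k = q := by rw [hqeq]; ring
        have h3 : MvPolynomial.aeval ![f,g] ((X 1 ^ l + r) + X 0 ^ k : MvPolynomial (Fin 2) ℂ)
            = 0 := by rw [h2]; exact hψq
        rw [map_add] at h3
        rw [← h3]
        congr 1
        simp
  -- main case: k*a = l*b = M
  have hMa : M = k * a := by rw [hMdef, heq, max_self]
  have ha' : a ≠ 0 := by
    intro h; rw [h, mul_zero] at hMa; omega
  have hb' : b ≠ 0 := by
    intro h; rw [h, mul_zero] at heq; rw [heq] at hMa; omega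
  have hfne : f ≠ 0 := fun h => ha' (by rw [hadef, h, Polynomial.natDegree_zero])
  have hgne : g ≠ 0 := fun h => hb' (by rw [hbdef, h, Polynomial.natDegree_zero])
  set A := MvPolynomial.aeval ![f,g] (pderiv 0 q) with hAdef
  set B := MvPolynomial.aeval ![f,g] (pderiv 1 q) with hBdef
  have hdegA : A.degree ≤ (((k-1) * a : ℕ) : WithBot ℕ) := by
    rw [hAdef]
    refine degbound_pderiv f g q _ 0 a (by simp [hadef]) ?_
    intro s hs
    rw [← hadef, ← hbdef]
    have h1 := hqb s hs
    have h2 : (k-1) * a = k * a - a := Nat.sub_one_mul k a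
    have h3 : 2 * a ≤ k * a := Nat.mul_le_mul_right a hk
    omega
  have hdegB : B.degree ≤ (((l-1) * b : ℕ) : WithBot ℕ) := by
    rw [hBdef]
    refine degbound_pderiv f g q _ 1 b (by simp [hbdef]) ?_
    intro s hs
    rw [← hadef, ← hbdef]
    have h1 := hqb s hs
    have h2 : (l-1) * b = l * b - b := Nat.sub_one_mul l b
    have h3 : 2 * b ≤ l * b := Nat.mul_le_mul_right b hl
    omega
  have hArep : A = (k : Polynomial ℂ) * f ^ (k-1) + MvPolynomial.aeval ![f,g] (pderiv 0 r) := by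
    rw [hAdef, hqeq, map_add, map_add, map_add, map_add]
    rw [pderiv_pow, pderiv_pow, pderiv_X_self, pderiv_X_of_ne (by decide : (1:Fin 2) ≠ 0),
      mul_one, mul_zero, map_zero, add_zero, map_mul, map_natCast, map_pow, MvPolynomial.aeval_X]
    simp
  have hBrep : B = (l : Polynomial ℂ) * g ^ (l-1) + MvPolynomial.aeval ![f,g] (pderiv 1 r) := by
    rw [hBdef, hqeq, map_add, map_add, map_add, map_add]
    rw [pderiv_pow, pderiv_pow, pderiv_X_self, pderiv_X_of_ne (by decide : (0:Fin 2) ≠ 1),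
      mul_one, mul_zero, map_zero, zero_add, map_mul, map_natCast, map_pow, MvPolynomial.aeval_X]
    simp
  have hposka : 0 < (k-1) * a := Nat.mul_pos (by omega) (Nat.pos_of_ne_zero ha')
  have hposlb : 0 < (l-1) * b := Nat.mul_pos (by omega) (Nat.pos_of_ne_zero hb')
  have hcoefA : A.coeff ((k-1) * a) = (k : ℂ) * f.leadingCoeff ^ (k-1) := by
    rw [hArep, Polynomial.coeff_add]
    have hz : (MvPolynomial.aeval ![f,g] (pderiv 0 r)).coeff ((k-1)*a) = 0 := by
      apply Polynomial.coeff_eq_zero_of_degree_lt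
      refine lt_of_le_of_lt (degbound_pderiv f g r ((k-1)*a - 1) 0 a (by simp [hadef]) ?_) ?_
      · intro s hs
        rw [← hadef, ← hbdef]
        have h1 := hrb s hs
        have h2 : (k-1) * a = k * a - a := Nat.sub_one_mul k a
        have h3 : 2 * a ≤ k * a := Nat.mul_le_mul_right a hk
        have h4 : 1 ≤ a := Nat.pos_of_ne_zero ha'
        omega
      · exact_mod_cast Nat.sub_lt hposka one_pos
    rw [hz, add_zero, show ((k : Polynomial ℂ)) = Polynomial.C (k:ℂ) by simp,
      Polynomial.coeff_C_mul,
      show (k-1) * a = (f ^ (k-1)).natDegree by rw [Polynomial.natDegree_pow, hadef],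
      Polynomial.coeff_natDegree, Polynomial.leadingCoeff_pow]
  have hcoefB : B.coeff ((l-1) * b) = (l : ℂ) * g.leadingCoeff ^ (l-1) := by
    rw [hBrep, Polynomial.coeff_add]
    have hz : (MvPolynomial.aeval ![f,g] (pderiv 1 r)).coeff ((l-1)*b) = 0 := by
      apply Polynomial.coeff_eq_zero_of_degree_lt
      refine lt_of_le_of_lt (degbound_pderiv f g r ((l-1)*b - 1) 1 b (by simp [hbdef]) ?_) ?_
      · intro s hs
        rw [← hadef, ← hbdef]
        have h1 := hrb s hs
        have h2 : (l-1) * b = l * b - b := Nat.sub_one_mul l b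
        have h3 : 2 * b ≤ l * b := Nat.mul_le_mul_right b hl
        have h4 : 1 ≤ b := Nat.pos_of_ne_zero hb'
        omega
      · exact_mod_cast Nat.sub_lt hposlb one_pos
    rw [hz, add_zero, show ((l : Polynomial ℂ)) = Polynomial.C (l:ℂ) by simp,
      Polynomial.coeff_C_mul,
      show (l-1) * b = (g ^ (l-1)).natDegree by rw [Polynomial.natDegree_pow, hbdef],
      Polynomial.coeff_natDegree, Polynomial.leadingCoeff_pow]
  have hcAne : A.coeff ((k-1) * a) ≠ 0 := by
    rw [hcoefA]
    exact mul_ne_zero (Nat.cast_ne_zero.mpr (by omega))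
      (pow_ne_zero _ (Polynomial.leadingCoeff_ne_zero.mpr hfne))
  have hcBne : B.coeff ((l-1) * b) ≠ 0 := by
    rw [hcoefB]
    exact mul_ne_zero (Nat.cast_ne_zero.mpr (by omega))
      (pow_ne_zero _ (Polynomial.leadingCoeff_ne_zero.mpr hgne))
  have hAne : A ≠ 0 := fun h => hcAne (by rw [h, Polynomial.coeff_zero])
  have hnatA : A.natDegree = (k-1) * a :=
    Polynomial.natDegree_eq_of_degree_eq_some
      (le_antisymm hdegA (Polynomial.le_degree_of_ne_zero hcAne))
  have hf' : derivative f ≠ 0 := fun h => ha' (Polynomial.natDegree_eq_zero_of_derivative_eq_zero h)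
  have hg' : derivative g ≠ 0 := fun h => hb' (Polynomial.natDegree_eq_zero_of_derivative_eq_zero h)
  by_cases hAB : IsCoprime A B
  · -- coprime case: degree contradiction
    have hdvd1 : A ∣ B * derivative g := ⟨-(derivative f), by linear_combination hcq⟩
    have hdvd : A ∣ derivative g := hAB.dvd_of_dvd_mul_left hdvd1
    have hle := Polynomial.natDegree_le_of_dvd hdvd hg'
    rw [hnatA] at hle
    have hlt : (derivative g).natDegree < b := by
      rw [hbdef]; exact Polynomial.natDegree_derivative_lt hb'
    have hklk : k + l ≤ k * l := by
      have h1 : 2 * l ≤ k * l := Nat.mul_le_mul_right l hk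
      have h2 : k * 2 ≤ k * l := Nat.mul_le_mul_left k hl
      omega
    have h1 : k ≤ (k-1) * l := by
      have h2 : (k-1) * l = k * l - l := Nat.sub_one_mul k l
      omega
    have h2 : k * ((k-1)*a) = ((k-1) * l) * b := by
      rw [show k * ((k-1)*a) = (k-1) * (k*a) by ring, heq]; ring
    have h3 : k * b ≤ ((k-1)*l) * b := Nat.mul_le_mul_right b h1
    have h4 : b ≤ (k-1)*a := Nat.le_of_mul_le_mul_left (by omega) (by omega : 0 < k)
    omega
  · -- non-coprime case: common root, singular point
    obtain ⟨c, hAc, hBc⟩ := exists_common_root A B hAne hAB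
    set p₀ := f.eval c with hp₀
    set p₁ := g.eval c with hp₁
    set fc := (derivative f).eval c with hfc
    set gc := (derivative g).eval c with hgc
    have hev : ∀ rr : MvPolynomial (Fin 2) ℂ,
        MvPolynomial.aeval ![p₀, p₁] rr = Polynomial.eval c (MvPolynomial.aeval ![f,g] rr) := by
      intro rr
      have hcomp : (Polynomial.aeval c : Polynomial ℂ →ₐ[ℂ] ℂ).comp (MvPolynomial.aeval ![f,g])
          = MvPolynomial.aeval ![p₀, p₁] := by
        apply MvPolynomial.algHom_ext
        intro i
        fin_cases i <;>
          simp [hp₀, hp₁, Polynomial.coe_aeval_eq_eval]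
      rw [← hcomp]
      simp [Polynomial.coe_aeval_eq_eval]
    have hEq : MvPolynomial.aeval ![p₀, p₁] q = 0 := by rw [hev, hψq, Polynomial.eval_zero]
    have hEqx : MvPolynomial.aeval ![p₀, p₁] (pderiv 0 q) = 0 := by rw [hev, ← hAdef]; exact hAc
    have hEqy : MvPolynomial.aeval ![p₀, p₁] (pderiv 1 q) = 0 := by rw [hev, ← hBdef]; exact hBc
    set w : MvPolynomial (Fin 2) ℂ :=
      MvPolynomial.C gc * (X 0 - MvPolynomial.C p₀)
        - MvPolynomial.C fc * (X 1 - MvPolynomial.C p₁) with hwdef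
    have hFw : MvPolynomial.aeval ![f,g] w
        = Polynomial.C gc * (f - Polynomial.C p₀) - Polynomial.C fc * (g - Polynomial.C p₁) := by
      rw [hwdef]
      simp [MvPolynomial.algebraMap_eq, Polynomial.algebraMap_eq]
    have hdbl : (Polynomial.X - Polynomial.C c)^2 ∣ MvPolynomial.aeval ![f,g] w := by
      apply sq_dvd_of_double_root
      · rw [hFw]
        simp [hp₀, hp₁]
      · rw [hFw, derivative_sub, Polynomial.derivative_C_mul, Polynomial.derivative_C_mul,
          derivative_sub, derivative_sub, Polynomial.derivative_C, Polynomial.derivative_C,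
          sub_zero, sub_zero]
        simp only [Polynomial.eval_sub, Polynomial.eval_mul, Polynomial.eval_C]
        rw [← hfc, ← hgc]
        ring
    obtain ⟨v, hv⟩ := hdbl
    obtain ⟨h₁, hh₁⟩ := hsurj v
    have hkerw : q ∣ (w - (P - MvPolynomial.C c)^2 * h₁) := by
      rw [← hker]
      have hψc : ψ (MvPolynomial.C c) = Polynomial.C c := by
        simp [MvPolynomial.algebraMap_eq]
      rw [map_sub, map_mul, map_pow, hFψ w, hv, map_sub, hP, hψc, hh₁]
      ring
    obtain ⟨h₂, hw2⟩ := hkerw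
    have hweq : w = (P - MvPolynomial.C c)^2 * h₁ + q * h₂ := by linear_combination hw2
    have hEs : MvPolynomial.aeval ![p₀, p₁] (P - MvPolynomial.C c) = 0 := by
      rw [hev, map_sub, ← hFψ, hP]
      simp [MvPolynomial.algebraMap_eq]
    have hgc0 : gc = 0 := by
      have h4 := congrArg (fun t => MvPolynomial.aeval ![p₀, p₁] (pderiv 0 t)) hweq
      have hl1 : pderiv (0 : Fin 2) w = MvPolynomial.C gc := by
        rw [hwdef]
        rw [map_sub, pderiv_mul, pderiv_mul, pderiv_C, pderiv_C]
        rw [map_sub, map_sub, pderiv_C, pderiv_C, pderiv_X_self,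
          pderiv_X_of_ne (by decide : (1:Fin 2) ≠ 0)]
        ring
      have hr1 : MvPolynomial.aeval ![p₀, p₁]
          (pderiv 0 ((P - MvPolynomial.C c)^2 * h₁ + q * h₂)) = 0 := by
        rw [map_add, pderiv_mul, pderiv_mul, pderiv_pow]
        simp only [map_add, map_mul, map_pow, map_natCast]
        rw [hEs, hEq, hEqx]
        ring
      rw [hl1, hr1] at h4
      simpa using h4
    have hfc0 : fc = 0 := by
      have h4 := congrArg (fun t => MvPolynomial.aeval ![p₀, p₁] (pderiv 1 t)) hweq
      have hl1 : pderiv (1 : Fin 2) w = - MvPolynomial.C fc := by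
        rw [hwdef]
        rw [map_sub, pderiv_mul, pderiv_mul, pderiv_C, pderiv_C]
        rw [map_sub, map_sub, pderiv_C, pderiv_C, pderiv_X_self,
          pderiv_X_of_ne (by decide : (0:Fin 2) ≠ 1)]
        ring
      have hr1 : MvPolynomial.aeval ![p₀, p₁]
          (pderiv 1 ((P - MvPolynomial.C c)^2 * h₁ + q * h₂)) = 0 := by
        rw [map_add, pderiv_mul, pderiv_mul, pderiv_pow]
        simp only [map_add, map_mul, map_pow, map_natCast]
        rw [hEs, hEq, hEqy]
        ring
      rw [hl1, hr1] at h4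
      have h5 : - fc = 0 := by simpa using h4
      linear_combination -h5
    have hfinal := congrArg (Polynomial.eval c) hcP
    simp only [Polynomial.eval_add, Polynomial.eval_mul, Polynomial.eval_one] at hfinal
    rw [← hfc, ← hgc, hfc0, hgc0, mul_zero, mul_zero, add_zero] at hfinal
    exact one_ne_zero hfinal.symm

end AMSAux
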